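/- (Theorem 1, maximizers are decoupled for distinct coefficients) Let r₁ ≥ … ≥ r_N ≥ 0, V_in = diag(e^{−2r₁}, e^{2r₁}, …, e^{−2r_N}, e^{2r_N}), and let g₁, …, g_N be real with strictly ordered squares g₁² > g₂² > … > g_N², G = diag(g₁, g₁, …, g_N, g_N). If a real 2N×2N orthogonal symplectic matrix K achieves the optimal QFI, i.e., (Tr((K·V_in·Kᵀ·G)²) − Tr(G²))/2 = 2·∑_{a=1}^{N} g_a²·sinh²(2r_a), then V = K·V_in·Kᵀ is decoupled: all off-diagonal 2×2 blocks of V vanish. Moreover V is properly ordered: the a-th diagonal block of V has mean photon number sinh²(r_a), i.e., trace 2·cosh(2r_a). -/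

import Mathlib

open Matrix

noncomputable section

/-- The 2N×2N symplectic form: N diagonal copies of `J = [[0,1],[-1,0]]`.
Modes are indexed by `Fin N`, each contributing two coordinates indexed by `Fin 2`. -/
def Omega (N : ℕ) : Matrix (Fin N × Fin 2) (Fin N × Fin 2) ℝ :=
  Matrix.of fun p q => if p.1 = q.1 then !![(0 : ℝ), 1; -1, 0] p.2 q.2 else 0

/-- The covariance matrix `diag(e^{−2r₁}, e^{2r₁}, …, e^{−2r_N}, e^{2r_N})` of N independent
squeezed states with squeezing levels `r a`. -/
def VIn {N : ℕ} (r : Fin N → ℝ) : Matrix (Fin N × Fin 2) (Fin N × Fin 2) ℝ :=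
  Matrix.diagonal fun p => Real.exp ((if p.2 = 0 then (-2 : ℝ) else 2) * r p.1)

/-- The a-th diagonal 2×2 block of a 2N×2N matrix. -/
def dblock {N : ℕ} (V : Matrix (Fin N × Fin 2) (Fin N × Fin 2) ℝ) (a : Fin N) :
    Matrix (Fin 2) (Fin 2) ℝ :=
  Matrix.of fun i j => V (a, i) (a, j)

/-- The phase-shift generator `G = diag(g₁, g₁, …, g_N, g_N)`. -/
def Gmat {N : ℕ} (g : Fin N → ℝ) : Matrix (Fin N × Fin 2) (Fin N × Fin 2) ℝ :=
  Matrix.diagonal fun p => g p.1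

/-- The QFI functional `H(V, G) := (Tr((V·G)²) − Tr(G²))/2`. -/
def qfi {N : ℕ} (V G : Matrix (Fin N × Fin 2) (Fin N × Fin 2) ℝ) : ℝ :=
  (Matrix.trace ((V * G) ^ 2) - Matrix.trace (G ^ 2)) / 2

lemma mul_omega {N : ℕ} (M : Matrix (Fin N × Fin 2) (Fin N × Fin 2) ℝ) (x y : Fin N × Fin 2) :
    (M * Omega N) x y = if y.2 = 0 then -(M x (y.1, 1)) else M x (y.1, 0) := by
  obtain ⟨y1, y2⟩ := y
  rw [Matrix.mul_apply, Fintype.sum_prod_type]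
  simp only [Omega, Matrix.of_apply, mul_ite, mul_zero]
  rw [Finset.sum_comm]
  simp only [Finset.sum_ite_eq', Finset.mem_univ, if_true]
  fin_cases y2 <;> simp [Fin.sum_univ_two]

lemma omega_mul {N : ℕ} (M : Matrix (Fin N × Fin 2) (Fin N × Fin 2) ℝ) (x y : Fin N × Fin 2) :
    (Omega N * M) x y = if x.2 = 0 then M (x.1, 1) y else -(M (x.1, 0) y) := by
  obtain ⟨x1, x2⟩ := x
  rw [Matrix.mul_apply, Fintype.sum_prod_type]
  simp only [Omega, Matrix.of_apply, ite_mul, zero_mul]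
  rw [Finset.sum_comm]
  simp only [Finset.sum_ite_eq, Finset.mem_univ, if_true]
  fin_cases x2 <;> simp [Fin.sum_univ_two]

lemma omega_mul_omega (N : ℕ) : Omega N * Omega N = -1 := by
  ext x y
  rw [omega_mul]
  obtain ⟨x1, x2⟩ := x; obtain ⟨y1, y2⟩ := y
  fin_cases x2 <;> fin_cases y2 <;> by_cases h : x1 = y1 <;>
    simp [Omega, h, Matrix.neg_apply, Matrix.one_apply, Prod.ext_iff]

lemma diag_symp {N : ℕ} (f : Fin N → ℝ) : VIn f * Omega N * (VIn f)ᵀ = Omega N := by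
  ext x y
  rw [VIn, Matrix.diagonal_transpose, Matrix.mul_diagonal, Matrix.diagonal_mul]
  obtain ⟨x1, x2⟩ := x; obtain ⟨y1, y2⟩ := y
  by_cases h : x1 = y1
  · subst h
    fin_cases x2 <;> fin_cases y2 <;>
      simp [Omega] <;> rw [← Real.exp_add] <;> norm_num
  · simp [Omega, h]

lemma VIn_mul_VIn {N : ℕ} (f h : Fin N → ℝ) : VIn f * VIn h = VIn (f + h) := by
  rw [VIn, VIn, VIn, Matrix.diagonal_mul_diagonal]
  refine congrArg Matrix.diagonal (funext fun p => ?_)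
  rw [← Real.exp_add, Pi.add_apply]
  ring_nf

lemma VIn_zero {N : ℕ} : VIn (0 : Fin N → ℝ) = 1 := by
  rw [VIn]
  convert Matrix.diagonal_one
  simp

lemma symp_mul {N : ℕ} {S T : Matrix (Fin N × Fin 2) (Fin N × Fin 2) ℝ}
    (hS : S * Omega N * Sᵀ = Omega N) (hT : T * Omega N * Tᵀ = Omega N) :
    (S * T) * Omega N * (S * T)ᵀ = Omega N := by
  rw [Matrix.transpose_mul]
  calc S * T * Omega N * (Tᵀ * Sᵀ) = S * (T * Omega N * Tᵀ) * Sᵀ := by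
        simp only [Matrix.mul_assoc]
    _ = Omega N := by rw [hT, hS]

lemma omega_conj_block {N : ℕ} (M : Matrix (Fin N × Fin 2) (Fin N × Fin 2) ℝ) (a : Fin N) :
    (Omega N * Mᵀ * Omega N) (a, (0 : Fin 2)) (a, 0) +
      (Omega N * Mᵀ * Omega N) (a, (1 : Fin 2)) (a, 1)
      = -(M (a, 0) (a, 0) + M (a, 1) (a, 1)) := by
  simp only [mul_omega, omega_mul, Matrix.transpose_apply]
  norm_num

lemma conj_diag_apply {N : ℕ} (K : Matrix (Fin N × Fin 2) (Fin N × Fin 2) ℝ)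
    (d : (Fin N × Fin 2) → ℝ) (p : Fin N × Fin 2) :
    (K * Matrix.diagonal d * Kᵀ) p p = ∑ q, K p q ^ 2 * d q := by
  rw [Matrix.mul_apply]
  simp only [Matrix.mul_diagonal, Matrix.transpose_apply]
  exact Finset.sum_congr rfl fun q _ => by ring

def ufun {N : ℕ} (K : Matrix (Fin N × Fin 2) (Fin N × Fin 2) ℝ) (a : Fin N)
    (q : Fin N × Fin 2) : ℝ := K (a, 0) q ^ 2 + K (a, 1) q ^ 2

def tfun {N : ℕ} (W : Matrix (Fin N × Fin 2) (Fin N × Fin 2) ℝ) (a : Fin N) : ℝ :=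
  W (a, 0) (a, 0) + W (a, 1) (a, 1)

set_option maxHeartbeats 2000000 in
/-- Theorem 1, maximizers are decoupled for distinct coefficients: with
`r₁ ≥ … ≥ r_N ≥ 0` and strictly ordered squares `g₁² > … > g_N²`, if an orthogonal symplectic
`K` achieves the optimal QFI `2·∑_a g_a²·sinh²(2r_a)`, then `V = K·V_in·Kᵀ` is decoupled (all
off-diagonal 2×2 blocks vanish) and properly ordered: the a-th diagonal block has mean photon
number `sinh²(r_a)`, i.e. trace `2·cosh(2r_a)`. -/
theorem stmt_14 (N : ℕ) (r : Fin N → ℝ) (hr0 : ∀ a, 0 ≤ r a) (hr : Antitone r)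
    (g : Fin N → ℝ) (hg : StrictAnti fun a => (g a) ^ 2)
    (K : Matrix (Fin N × Fin 2) (Fin N × Fin 2) ℝ)
    (hKorth : Kᵀ * K = 1) (hKsymp : K * Omega N * Kᵀ = Omega N)
    (V : Matrix (Fin N × Fin 2) (Fin N × Fin 2) ℝ)
    (hVdef : V = K * VIn r * Kᵀ)
    (hopt : qfi V (Gmat g) = 2 * ∑ a : Fin N, (g a) ^ 2 * Real.sinh (2 * r a) ^ 2) :
    (∀ a b : Fin N, a ≠ b → ∀ i j : Fin 2, V (a, i) (b, j) = 0)
      ∧ ∀ a : Fin N, (dblock V a).trace = 2 * Real.cosh (2 * r a) := by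
  -- basic consequences of orthogonality
  have hK1 : ∀ X : Matrix (Fin N × Fin 2) (Fin N × Fin 2) ℝ, Kᵀ * (K * X) = X := fun X => by
    rw [← Matrix.mul_assoc, hKorth, Matrix.one_mul]
  have hKKt : K * Kᵀ = 1 := by rwa [mul_eq_one_comm] at hKorth
  have hVint : (VIn r)ᵀ = VIn r := by rw [VIn]; exact Matrix.diagonal_transpose _
  have hVsym : Vᵀ = V := by
    rw [hVdef, Matrix.transpose_mul, Matrix.transpose_mul, Matrix.transpose_transpose, hVint,
      ← Matrix.mul_assoc]
  have hVs : ∀ p q, V q p = V p q := fun p q => by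
    rw [← Matrix.transpose_apply V p q, hVsym]
  have hprod : ∀ f h : Fin N → ℝ,
      (K * VIn f * Kᵀ) * (K * VIn h * Kᵀ) = K * VIn (f + h) * Kᵀ := by
    intro f h
    calc (K * VIn f * Kᵀ) * (K * VIn h * Kᵀ)
        = K * (VIn f * (Kᵀ * (K * (VIn h * Kᵀ)))) := by simp only [Matrix.mul_assoc]
      _ = K * (VIn f * (VIn h * Kᵀ)) := by rw [hK1]
      _ = K * ((VIn f * VIn h) * Kᵀ) := by rw [Matrix.mul_assoc]
      _ = K * VIn (f + h) * Kᵀ := by rw [VIn_mul_VIn, Matrix.mul_assoc]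
  have hW : V * V = K * VIn (fun a => 2 * r a) * Kᵀ := by
    rw [hVdef, hprod]
    have : r + r = fun a => 2 * r a := funext fun a => by rw [Pi.add_apply, two_mul]
    rw [this]
  have hKOK : Kᵀ * Omega N * K = Omega N := by
    calc Kᵀ * Omega N * K = Kᵀ * (K * Omega N * Kᵀ) * K := by rw [hKsymp]
      _ = (Kᵀ * K) * Omega N * (Kᵀ * K) := by simp only [Matrix.mul_assoc]
      _ = Omega N := by rw [hKorth, Matrix.one_mul, Matrix.mul_one]
  have hVsymp : V * Omega N * Vᵀ = Omega N := by
    rw [hVdef]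
    exact symp_mul (symp_mul hKsymp (diag_symp r))
      (by rw [Matrix.transpose_transpose]; exact hKOK)
  have hWT : (V * V)ᵀ = V * V := by rw [Matrix.transpose_mul, hVsym]
  have hWsymp : (V * V) * Omega N * (V * V)ᵀ = Omega N := symp_mul hVsymp hVsymp
  have hWW : (V * V) * Omega N * (V * V) = Omega N := by
    conv_rhs => rw [← hWsymp]
    rw [hWT]
  have hWinv : (V * V) * (K * VIn (fun a => -(2 * r a)) * Kᵀ) = 1 := by
    rw [hW, hprod]
    have : ((fun a => 2 * r a) + fun a => -(2 * r a)) = (0 : Fin N → ℝ) :=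
      funext fun a => by simp
    rw [this, VIn_zero, Matrix.mul_one, hKKt]
  have hW2 : K * VIn (fun a => -(2 * r a)) * Kᵀ = -(Omega N * (V * V)ᵀ * Omega N) := by
    have h2 : (V * V) * -(Omega N * (V * V)ᵀ * Omega N) = 1 := by
      rw [hWT, Matrix.mul_neg]
      have h3 : (V * V) * (Omega N * (V * V) * Omega N)
          = ((V * V) * Omega N * (V * V)) * Omega N := by simp only [Matrix.mul_assoc]
      rw [h3, hWW, omega_mul_omega, neg_neg]
    have h4 : (K * VIn (fun a => -(2 * r a)) * Kᵀ) * (V * V) = 1 :=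
      mul_eq_one_comm.mp hWinv
    calc K * VIn (fun a => -(2 * r a)) * Kᵀ
        = (K * VIn (fun a => -(2 * r a)) * Kᵀ) * ((V * V) * -(Omega N * (V * V)ᵀ * Omega N)) := by
          rw [h2, Matrix.mul_one]
      _ = ((K * VIn (fun a => -(2 * r a)) * Kᵀ) * (V * V)) * -(Omega N * (V * V)ᵀ * Omega N) := by
          simp only [Matrix.mul_assoc]
      _ = -(Omega N * (V * V)ᵀ * Omega N) := by rw [h4, Matrix.one_mul]
  -- the mode-occupation weights
  have hexp : ∀ q : Fin N × Fin 2,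
      Real.exp ((if q.2 = 0 then (-2 : ℝ) else 2) * (2 * r q.1)) +
        Real.exp ((if q.2 = 0 then (-2 : ℝ) else 2) * (-(2 * r q.1)))
        = 2 * Real.cosh (4 * r q.1) := by
    intro q
    rw [Real.cosh_eq]
    split_ifs with h
    · rw [show (-2 : ℝ) * (2 * r q.1) = -(4 * r q.1) by ring,
        show (-2 : ℝ) * (-(2 * r q.1)) = 4 * r q.1 by ring]
      ring
    · rw [show (2 : ℝ) * (2 * r q.1) = 4 * r q.1 by ring,
        show (2 : ℝ) * (-(2 * r q.1)) = -(4 * r q.1) by ring]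
      ring
  have e1 : ∀ a, tfun (V * V) a
      = ∑ q, ufun K a q * Real.exp ((if q.2 = 0 then (-2 : ℝ) else 2) * (2 * r q.1)) := by
    intro a
    show (V * V) (a, 0) (a, 0) + (V * V) (a, 1) (a, 1) = _
    rw [hW,
      show VIn (fun a => 2 * r a) = Matrix.diagonal
        (fun q : Fin N × Fin 2 => Real.exp ((if q.2 = 0 then (-2 : ℝ) else 2) * (2 * r q.1)))
        from rfl,
      conj_diag_apply, conj_diag_apply, ← Finset.sum_add_distrib]
    exact Finset.sum_congr rfl fun q _ => by rw [ufun]; ring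
  have e2 : ∀ a, tfun (V * V) a
      = ∑ q, ufun K a q * Real.exp ((if q.2 = 0 then (-2 : ℝ) else 2) * (-(2 * r q.1))) := by
    intro a
    have h5 : tfun (K * VIn (fun a => -(2 * r a)) * Kᵀ) a = tfun (V * V) a := by
      rw [tfun, tfun, hW2]
      have h6 := omega_conj_block (V * V) a
      simp only [Matrix.neg_apply]
      linarith
    rw [← h5, tfun,
      show VIn (fun a => -(2 * r a)) = Matrix.diagonal
        (fun q : Fin N × Fin 2 => Real.exp ((if q.2 = 0 then (-2 : ℝ) else 2) * (-(2 * r q.1))))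
        from rfl,
      conj_diag_apply, conj_diag_apply, ← Finset.sum_add_distrib]
    exact Finset.sum_congr rfl fun q _ => by rw [ufun]; ring
  have ht : ∀ a, tfun (V * V) a = ∑ q, ufun K a q * Real.cosh (4 * r q.1) := by
    intro a
    have h3 : (∑ q, ufun K a q * Real.exp ((if q.2 = 0 then (-2 : ℝ) else 2) * (2 * r q.1)))
        + (∑ q, ufun K a q * Real.exp ((if q.2 = 0 then (-2 : ℝ) else 2) * (-(2 * r q.1))))
        = ∑ q, ufun K a q * (2 * Real.cosh (4 * r q.1)) := by
      rw [← Finset.sum_add_distrib]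
      exact Finset.sum_congr rfl fun q _ => by rw [← hexp q]; ring
    have h4 : ∑ q, ufun K a q * (2 * Real.cosh (4 * r q.1))
        = 2 * ∑ q, ufun K a q * Real.cosh (4 * r q.1) := by
      rw [Finset.mul_sum]
      exact Finset.sum_congr rfl fun q _ => by ring
    have h1 := e1 a
    have h2' := e2 a
    linarith
  have hunn : ∀ (a : Fin N) (q : Fin N × Fin 2), 0 ≤ ufun K a q := fun a q => by
    rw [ufun]; positivity
  have hcol : ∀ q, ∑ a, ufun K a q = 1 := by
    intro q
    have h := congrFun (congrFun hKorth q) q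
    rw [Matrix.mul_apply] at h
    simp only [Matrix.transpose_apply, Matrix.one_apply_eq] at h
    rw [Fintype.sum_prod_type] at h
    calc ∑ a, ufun K a q = ∑ a, ∑ i : Fin 2, K (a, i) q * K (a, i) q :=
        Finset.sum_congr rfl fun a _ => by rw [Fin.sum_univ_two, ufun]; ring
      _ = 1 := h
  have hrow : ∀ a, ∑ q, ufun K a q = 2 := by
    intro a
    have h0 := congrFun (congrFun hKKt (a, (0 : Fin 2))) (a, 0)
    have h1 := congrFun (congrFun hKKt (a, (1 : Fin 2))) (a, 1)
    rw [Matrix.mul_apply] at h0 h1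
    simp only [Matrix.transpose_apply, Matrix.one_apply_eq] at h0 h1
    have e0 : ∑ q, K (a, (0 : Fin 2)) q ^ 2 = 1 := by
      rw [← h0]; exact Finset.sum_congr rfl fun q _ => by ring
    have e1' : ∑ q, K (a, (1 : Fin 2)) q ^ 2 = 1 := by
      rw [← h1]; exact Finset.sum_congr rfl fun q _ => by ring
    calc ∑ q, ufun K a q = (∑ q, K (a, (0:Fin 2)) q ^ 2) + ∑ q, K (a, (1:Fin 2)) q ^ 2 := by
          rw [← Finset.sum_add_distrib]; exact Finset.sum_congr rfl fun q _ => by rw [ufun]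
      _ = 2 := by rw [e0, e1']; norm_num
  have hSsum : ∀ S : Finset (Fin N), ∑ a ∈ S, tfun (V * V) a
      = ∑ q, (∑ a ∈ S, ufun K a q) * Real.cosh (4 * r q.1) := by
    intro S
    calc ∑ a ∈ S, tfun (V * V) a = ∑ a ∈ S, ∑ q, ufun K a q * Real.cosh (4 * r q.1) :=
        Finset.sum_congr rfl fun a _ => ht a
      _ = ∑ q, ∑ a ∈ S, ufun K a q * Real.cosh (4 * r q.1) := Finset.sum_comm
      _ = ∑ q, (∑ a ∈ S, ufun K a q) * Real.cosh (4 * r q.1) :=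
        Finset.sum_congr rfl fun q _ => (Finset.sum_mul _ _ _).symm
  have htotal : ∑ a, (tfun (V * V) a - 2 * Real.cosh (4 * r a)) = 0 := by
    rw [Finset.sum_sub_distrib]
    have h1 : ∑ a, tfun (V * V) a = ∑ a : Fin N, 2 * Real.cosh (4 * r a) := by
      rw [hSsum Finset.univ,
        Finset.sum_congr rfl fun (q : Fin N × Fin 2) _ => by rw [hcol q, one_mul],
        Fintype.sum_prod_type]
      exact Finset.sum_congr rfl fun a _ => by rw [Fin.sum_univ_two]; ring
    rw [h1, sub_self]
  have hcosh_nn : ∀ b : Fin N, (0:ℝ) ≤ 4 * r b := fun b => by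
    have := hr0 b; linarith
  have hmaj : ∀ m : ℕ, (hm : m < N) →
      ∑ a ∈ Finset.univ.filter (fun a : Fin N => (a : ℕ) < m),
        (tfun (V * V) a - 2 * Real.cosh (4 * r a)) ≤ 0 := by
    intro m hm
    set S : Finset (Fin N) := Finset.univ.filter (fun a : Fin N => (a : ℕ) < m) with hSdef
    set θ : ℝ := Real.cosh (4 * r ⟨m, hm⟩) with hθdef
    have hxle : ∀ q : Fin N × Fin 2, (q.1 : ℕ) < m → θ ≤ Real.cosh (4 * r q.1) := by
      intro q hq
      rw [hθdef, Real.cosh_le_cosh, abs_of_nonneg (hcosh_nn _), abs_of_nonneg (hcosh_nn _)]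
      have : r ⟨m, hm⟩ ≤ r q.1 := hr (le_of_lt (Fin.lt_def.mpr hq))
      linarith
    have hxge : ∀ q : Fin N × Fin 2, ¬((q.1 : ℕ) < m) → Real.cosh (4 * r q.1) ≤ θ := by
      intro q hq
      rw [hθdef, Real.cosh_le_cosh, abs_of_nonneg (hcosh_nn _), abs_of_nonneg (hcosh_nn _)]
      have : r q.1 ≤ r ⟨m, hm⟩ := hr (Fin.le_def.mpr (Nat.le_of_not_lt hq))
      linarith
    have hwle : ∀ q, ∑ a ∈ S, ufun K a q ≤ 1 := by
      intro q
      calc ∑ a ∈ S, ufun K a q ≤ ∑ a, ufun K a q :=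
            Finset.sum_le_sum_of_subset_of_nonneg (Finset.subset_univ S)
              (fun i _ _ => hunn i q)
        _ = 1 := hcol q
    have hwnn : ∀ q, (0:ℝ) ≤ ∑ a ∈ S, ufun K a q := fun q =>
      Finset.sum_nonneg fun a _ => hunn a q
    have hcard : ((S.card : ℝ)) = m := by
      have h3 : ∑ a : Fin N, (if (a : ℕ) < m then (1:ℝ) else 0) = m := by
        rw [Fin.sum_univ_eq_sum_range (fun i => if i < m then (1:ℝ) else 0) N,
          ← Finset.sum_filter]
        have h4 : (Finset.range N).filter (· < m) = Finset.range m := by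
          ext x; simp only [Finset.mem_filter, Finset.mem_range]; omega
        rw [h4, Finset.sum_const, Finset.card_range]; simp
      rw [← h3, ← Finset.sum_filter, Finset.sum_const, ← hSdef]; simp
    have hwsum : ∑ q : Fin N × Fin 2, (∑ a ∈ S, ufun K a q) = 2 * m := by
      rw [Finset.sum_comm, Finset.sum_congr rfl fun a (_ : a ∈ S) => hrow a,
        Finset.sum_const, nsmul_eq_mul]
      rw [show ((S.card : ℝ)) * 2 = 2 * ((S.card : ℝ)) by ring, hcard]
    have hchi : ∑ q : Fin N × Fin 2, (if (q.1 : ℕ) < m then (1:ℝ) else 0) = 2 * m := by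
      rw [Fintype.sum_prod_type]
      rw [Finset.sum_congr rfl fun (a : Fin N) (_ : a ∈ Finset.univ) => by
        rw [Fin.sum_univ_two]]
      have h3 : ∑ a : Fin N, ((if (a : ℕ) < m then (1:ℝ) else 0) +
          (if (a : ℕ) < m then (1:ℝ) else 0)) = ∑ a : Fin N, 2 * (if (a : ℕ) < m then (1:ℝ) else 0) :=
        Finset.sum_congr rfl fun a _ => by ring
      rw [h3, ← Finset.mul_sum, ← Finset.sum_filter, Finset.sum_const, ← hSdef]
      simp [hcard]
    have hrhs : ∑ a ∈ S, 2 * Real.cosh (4 * r a)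
        = ∑ q : Fin N × Fin 2, (if (q.1 : ℕ) < m then (1:ℝ) else 0) * Real.cosh (4 * r q.1) := by
      rw [Fintype.sum_prod_type]
      rw [Finset.sum_congr rfl fun (a : Fin N) (_ : a ∈ Finset.univ) => by
        rw [Fin.sum_univ_two]]
      have h3 : ∑ a : Fin N, ((if (a : ℕ) < m then (1:ℝ) else 0) * Real.cosh (4 * r a) +
          (if (a : ℕ) < m then (1:ℝ) else 0) * Real.cosh (4 * r a))
          = ∑ a : Fin N, (if (a : ℕ) < m then 2 * Real.cosh (4 * r a) else 0) :=
        Finset.sum_congr rfl fun a _ => by split <;> ring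
      rw [h3, ← Finset.sum_filter]
    have hkey : ∑ q : Fin N × Fin 2, ((∑ a ∈ S, ufun K a q) -
        (if (q.1 : ℕ) < m then (1:ℝ) else 0)) * Real.cosh (4 * r q.1) ≤ 0 := by
      calc ∑ q : Fin N × Fin 2, ((∑ a ∈ S, ufun K a q) -
            (if (q.1 : ℕ) < m then (1:ℝ) else 0)) * Real.cosh (4 * r q.1)
          ≤ ∑ q : Fin N × Fin 2, ((∑ a ∈ S, ufun K a q) -
            (if (q.1 : ℕ) < m then (1:ℝ) else 0)) * θ := by
            refine Finset.sum_le_sum fun q _ => ?_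
            by_cases hq : (q.1 : ℕ) < m
            · rw [if_pos hq]
              exact mul_le_mul_of_nonpos_left (hxle q hq) (by linarith [hwle q])
            · rw [if_neg hq, sub_zero]
              exact mul_le_mul_of_nonneg_left (hxge q hq) (hwnn q)
        _ = (∑ q : Fin N × Fin 2, ((∑ a ∈ S, ufun K a q) -
            (if (q.1 : ℕ) < m then (1:ℝ) else 0))) * θ := (Finset.sum_mul _ _ _).symm
        _ = 0 := by rw [Finset.sum_sub_distrib, hwsum, hchi]; ring
    calc ∑ a ∈ S, (tfun (V * V) a - 2 * Real.cosh (4 * r a))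
        = ∑ a ∈ S, tfun (V * V) a - ∑ a ∈ S, 2 * Real.cosh (4 * r a) :=
          Finset.sum_sub_distrib _ _
      _ = ∑ q : Fin N × Fin 2, ((∑ a ∈ S, ufun K a q) -
            (if (q.1 : ℕ) < m then (1:ℝ) else 0)) * Real.cosh (4 * r q.1) := by
          rw [hSsum S, hrhs, ← Finset.sum_sub_distrib]
          exact Finset.sum_congr rfl fun q _ => by ring
      _ ≤ 0 := hkey
  -- trace computations
  have hGsq : Matrix.trace ((Gmat g) ^ 2) = ∑ a, 2 * g a ^ 2 := by
    rw [sq, Gmat, Matrix.diagonal_mul_diagonal, Matrix.trace_diagonal, Fintype.sum_prod_type]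
    exact Finset.sum_congr rfl fun a _ => by rw [Fin.sum_univ_two]; ring
  have hTr : Matrix.trace ((V * Gmat g) ^ 2)
      = ∑ p : Fin N × Fin 2, ∑ q : Fin N × Fin 2, g p.1 * g q.1 * V p q ^ 2 := by
    rw [sq, Matrix.trace]
    refine Finset.sum_congr rfl fun p _ => ?_
    rw [Matrix.diag_apply, Matrix.mul_apply]
    refine Finset.sum_congr rfl fun q _ => ?_
    simp only [Gmat, Matrix.mul_diagonal]
    rw [hVs p q]
    ring
  have hTreq : Matrix.trace ((V * Gmat g) ^ 2)
      = ∑ a, g a ^ 2 * (2 * Real.cosh (4 * r a)) := by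
    have h7 := hopt
    rw [qfi] at h7
    have h8 : Matrix.trace ((V * Gmat g) ^ 2)
        = 4 * ∑ a, g a ^ 2 * Real.sinh (2 * r a) ^ 2 + ∑ a, 2 * g a ^ 2 := by
      rw [hGsq] at h7; linarith
    rw [h8, Finset.mul_sum, ← Finset.sum_add_distrib]
    refine Finset.sum_congr rfl fun a _ => ?_
    have h9 : Real.cosh (4 * r a) = 1 + 2 * Real.sinh (2 * r a) ^ 2 := by
      rw [show (4:ℝ) * r a = 2 * (2 * r a) by ring, Real.cosh_two_mul, Real.cosh_sq]
      ring
    rw [h9]; ring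
  have hsq : ∀ p, (V * V) p p = ∑ q, V p q ^ 2 := by
    intro p
    rw [Matrix.mul_apply]
    refine Finset.sum_congr rfl fun q _ => ?_
    rw [hVs p q]; ring
  have havg : ∑ p : Fin N × Fin 2, ∑ q : Fin N × Fin 2, ((g p.1 ^ 2 + g q.1 ^ 2) / 2) * V p q ^ 2
      = ∑ a, g a ^ 2 * tfun (V * V) a := by
    have hsecond : ∑ p : Fin N × Fin 2, ∑ q : Fin N × Fin 2, (g q.1 ^ 2 / 2) * V p q ^ 2
        = ∑ p : Fin N × Fin 2, ∑ q : Fin N × Fin 2, (g p.1 ^ 2 / 2) * V p q ^ 2 := by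
      rw [Finset.sum_comm]
      exact Finset.sum_congr rfl fun p _ => Finset.sum_congr rfl fun q _ => by rw [hVs p q]
    calc ∑ p : Fin N × Fin 2, ∑ q : Fin N × Fin 2, ((g p.1 ^ 2 + g q.1 ^ 2) / 2) * V p q ^ 2
        = ∑ p : Fin N × Fin 2, (∑ q : Fin N × Fin 2, (g p.1 ^ 2 / 2) * V p q ^ 2
            + ∑ q : Fin N × Fin 2, (g q.1 ^ 2 / 2) * V p q ^ 2) := by
          refine Finset.sum_congr rfl fun p _ => ?_
          rw [← Finset.sum_add_distrib]
          exact Finset.sum_congr rfl fun q _ => by ring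
      _ = (∑ p : Fin N × Fin 2, ∑ q : Fin N × Fin 2, (g p.1 ^ 2 / 2) * V p q ^ 2)
            + ∑ p : Fin N × Fin 2, ∑ q : Fin N × Fin 2, (g q.1 ^ 2 / 2) * V p q ^ 2 :=
          Finset.sum_add_distrib
      _ = ∑ p : Fin N × Fin 2, g p.1 ^ 2 * (V * V) p p := by
          rw [hsecond, ← Finset.sum_add_distrib]
          refine Finset.sum_congr rfl fun p _ => ?_
          rw [hsq p, Finset.mul_sum, ← Finset.sum_add_distrib]
          exact Finset.sum_congr rfl fun q _ => by ring
      _ = ∑ a, g a ^ 2 * tfun (V * V) a := by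
          rw [Fintype.sum_prod_type]
          refine Finset.sum_congr rfl fun a _ => ?_
          rw [Fin.sum_univ_two, tfun]
          ring
  have hineq : ∑ p : Fin N × Fin 2, ∑ q : Fin N × Fin 2, g p.1 * g q.1 * V p q ^ 2
      ≤ ∑ p : Fin N × Fin 2, ∑ q : Fin N × Fin 2, ((g p.1 ^ 2 + g q.1 ^ 2) / 2) * V p q ^ 2 :=
    Finset.sum_le_sum fun p _ => Finset.sum_le_sum fun q _ => by
      nlinarith [sq_nonneg ((g p.1 - g q.1) * V p q)]
  have hchain : ∑ a, g a ^ 2 * (2 * Real.cosh (4 * r a)) ≤ ∑ a, g a ^ 2 * tfun (V * V) a := by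
    calc ∑ a, g a ^ 2 * (2 * Real.cosh (4 * r a))
        = ∑ p : Fin N × Fin 2, ∑ q : Fin N × Fin 2, g p.1 * g q.1 * V p q ^ 2 := by
          rw [← hTr, hTreq]
      _ ≤ ∑ p : Fin N × Fin 2, ∑ q : Fin N × Fin 2, ((g p.1 ^ 2 + g q.1 ^ 2) / 2) * V p q ^ 2 :=
          hineq
      _ = ∑ a, g a ^ 2 * tfun (V * V) a := havg
  -- Abel summation: conclude t a = 2 cosh (4 r a) for every a
  set D : ℕ → ℝ := fun i =>
    if h : i < N then tfun (V * V) ⟨i, h⟩ - 2 * Real.cosh (4 * r ⟨i, h⟩) else 0 with hD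
  set Gn : ℕ → ℝ := fun i => if h : i < N then g ⟨i, h⟩ ^ 2 else 0 with hGn
  have hDval : ∀ a : Fin N, D (a : ℕ) = tfun (V * V) a - 2 * Real.cosh (4 * r a) := by
    intro a
    rw [hD]
    simp only []
    rw [dif_pos a.isLt, Fin.eta]
  have hGnval : ∀ a : Fin N, Gn (a : ℕ) = g a ^ 2 := by
    intro a
    rw [hGn]
    simp only []
    rw [dif_pos a.isLt, Fin.eta]
  have hDrange : ∀ m : ℕ, m ≤ N → ∑ j ∈ Finset.range m, D j
      = ∑ a ∈ Finset.univ.filter (fun a : Fin N => (a : ℕ) < m),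
          (tfun (V * V) a - 2 * Real.cosh (4 * r a)) := by
    intro m hm
    calc ∑ j ∈ Finset.range m, D j = ∑ j ∈ Finset.range N, if j < m then D j else 0 := by
          rw [← Finset.sum_filter]
          congr 1
          ext x
          simp only [Finset.mem_filter, Finset.mem_range]
          omega
      _ = ∑ a : Fin N, (if (a : ℕ) < m then D (a : ℕ) else 0) :=
          (Fin.sum_univ_eq_sum_range (fun j => if j < m then D j else 0) N).symm
      _ = ∑ a : Fin N, (if (a : ℕ) < m then tfun (V * V) a - 2 * Real.cosh (4 * r a) else 0) :=
          Finset.sum_congr rfl fun a _ => by rw [hDval a]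
      _ = ∑ a ∈ Finset.univ.filter (fun a : Fin N => (a : ℕ) < m),
            (tfun (V * V) a - 2 * Real.cosh (4 * r a)) := (Finset.sum_filter _ _).symm
  have hsum0 : ∑ j ∈ Finset.range N, D j = 0 := by
    rw [hDrange N le_rfl]
    have huniv : Finset.univ.filter (fun a : Fin N => (a : ℕ) < N) = Finset.univ := by
      ext a; simp [a.isLt]
    rw [huniv]
    exact htotal
  have hGD : ∑ i ∈ Finset.range N, Gn i • D i
      = ∑ a, g a ^ 2 * (tfun (V * V) a - 2 * Real.cosh (4 * r a)) := by
    rw [← Fin.sum_univ_eq_sum_range (fun i => Gn i • D i) N]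
    exact Finset.sum_congr rfl fun a _ => by rw [smul_eq_mul, hDval a, hGnval a]
  have hGDge : 0 ≤ ∑ i ∈ Finset.range N, Gn i • D i := by
    rw [hGD]
    have h5 : ∑ a, g a ^ 2 * (tfun (V * V) a - 2 * Real.cosh (4 * r a))
        = ∑ a, g a ^ 2 * tfun (V * V) a - ∑ a, g a ^ 2 * (2 * Real.cosh (4 * r a)) := by
      rw [← Finset.sum_sub_distrib]
      exact Finset.sum_congr rfl fun a _ => by ring
    rw [h5]
    linarith
  have habel := Finset.sum_range_by_parts Gn D N
  rw [hsum0, smul_zero, zero_sub] at habel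
  have hterm : ∀ i ∈ Finset.range (N - 1),
      (0:ℝ) ≤ (Gn (i + 1) - Gn i) • (∑ j ∈ Finset.range (i + 1), D j) := by
    intro i hi
    rw [Finset.mem_range] at hi
    have hi1 : i + 1 < N := by omega
    have hii : i < N := by omega
    have hg1 : Gn (i + 1) - Gn i ≤ 0 := by
      rw [hGn]
      simp only []
      rw [dif_pos hi1, dif_pos hii]
      have h6 := hg (show (⟨i, hii⟩ : Fin N) < ⟨i + 1, hi1⟩ from Fin.mk_lt_mk.mpr (by omega))
      simp only [] at h6
      linarith
    have hT : ∑ j ∈ Finset.range (i + 1), D j ≤ 0 := by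
      rw [hDrange (i + 1) (by omega)]
      exact hmaj (i + 1) hi1
    rw [smul_eq_mul]
    nlinarith
  have hGDle : ∑ i ∈ Finset.range N, Gn i • D i ≤ 0 := by
    rw [habel]
    have := Finset.sum_nonneg hterm
    linarith
  have hterm0 : ∀ i ∈ Finset.range (N - 1),
      (Gn (i + 1) - Gn i) • (∑ j ∈ Finset.range (i + 1), D j) = 0 := by
    have hzero : ∑ i ∈ Finset.range (N - 1),
        (Gn (i + 1) - Gn i) • (∑ j ∈ Finset.range (i + 1), D j) = 0 := by
      have h7 : ∑ i ∈ Finset.range N, Gn i • D i = 0 := le_antisymm hGDle hGDge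
      rw [h7] at habel
      linarith
    exact (Finset.sum_eq_zero_iff_of_nonneg hterm).mp hzero
  have hpartial : ∀ m : ℕ, m ≤ N → ∑ j ∈ Finset.range m, D j = 0 := by
    intro m hm
    rcases Nat.eq_zero_or_pos m with h0 | hpos
    · subst h0; simp
    rcases eq_or_lt_of_le hm with hEq | hlt
    · subst hEq; exact hsum0
    · have h9 := hterm0 (m - 1) (by rw [Finset.mem_range]; omega)
      have hm1 : m - 1 + 1 = m := by omega
      rw [hm1] at h9
      have hmN : m - 1 < N := by omega
      have hne : Gn m - Gn (m - 1) ≠ 0 := by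
        rw [hGn]
        simp only []
        rw [dif_pos hlt, dif_pos hmN]
        intro hc
        have h10 := hg (show (⟨m - 1, hmN⟩ : Fin N) < ⟨m, hlt⟩ from Fin.mk_lt_mk.mpr (by omega))
        simp only [] at h10
        linarith [sub_eq_zero.mp hc]
      rw [smul_eq_mul] at h9
      rcases mul_eq_zero.mp h9 with h | h
      · exact absurd h hne
      · exact h
  have ht_eq : ∀ a : Fin N, tfun (V * V) a = 2 * Real.cosh (4 * r a) := by
    intro a
    have h1 := hpartial ((a : ℕ) + 1) a.isLt
    have h2 := hpartial (a : ℕ) (le_of_lt a.isLt)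
    rw [Finset.sum_range_succ, h2, zero_add] at h1
    rw [hDval a] at h1
    linarith
  -- equality of the two double sums, hence pointwise equality
  have hsumeq : ∑ p : Fin N × Fin 2, ∑ q : Fin N × Fin 2, g p.1 * g q.1 * V p q ^ 2
      = ∑ p : Fin N × Fin 2, ∑ q : Fin N × Fin 2, ((g p.1 ^ 2 + g q.1 ^ 2) / 2) * V p q ^ 2 := by
    calc ∑ p : Fin N × Fin 2, ∑ q : Fin N × Fin 2, g p.1 * g q.1 * V p q ^ 2
        = ∑ a, g a ^ 2 * (2 * Real.cosh (4 * r a)) := by rw [← hTr, hTreq]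
      _ = ∑ a, g a ^ 2 * tfun (V * V) a :=
          Finset.sum_congr rfl fun a _ => by rw [ht_eq a]
      _ = ∑ p : Fin N × Fin 2, ∑ q : Fin N × Fin 2, ((g p.1 ^ 2 + g q.1 ^ 2) / 2) * V p q ^ 2 :=
          havg.symm
  have hptfull : ∀ p : Fin N × Fin 2, ∀ q : Fin N × Fin 2,
      g p.1 * g q.1 * V p q ^ 2 = ((g p.1 ^ 2 + g q.1 ^ 2) / 2) * V p q ^ 2 := by
    have houter := (Finset.sum_eq_sum_iff_of_le (fun p (_ : p ∈ Finset.univ) =>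
      Finset.sum_le_sum fun q (_ : q ∈ Finset.univ) => (by
        nlinarith [sq_nonneg ((g p.1 - g q.1) * V p q)] :
          g p.1 * g q.1 * V p q ^ 2 ≤ ((g p.1 ^ 2 + g q.1 ^ 2) / 2) * V p q ^ 2))).mp hsumeq
    intro p q
    have hinner := (Finset.sum_eq_sum_iff_of_le (fun q (_ : q ∈ Finset.univ) => (by
        nlinarith [sq_nonneg ((g p.1 - g q.1) * V p q)] :
          g p.1 * g q.1 * V p q ^ 2 ≤ ((g p.1 ^ 2 + g q.1 ^ 2) / 2) * V p q ^ 2))).mp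
      (houter p (Finset.mem_univ p))
    exact hinner q (Finset.mem_univ q)
  have hdec : ∀ p q : Fin N × Fin 2, p.1 ≠ q.1 → V p q = 0 := by
    intro p q hpq
    have h1 := hptfull p q
    have hggne : g p.1 ≠ g q.1 := by
      intro hc
      have hsq' : (fun a => (g a) ^ 2) p.1 = (fun a => (g a) ^ 2) q.1 := by
        show g p.1 ^ 2 = g q.1 ^ 2
        rw [hc]
      exact hpq (hg.injective hsq')
    have h2 : (g p.1 - g q.1) ^ 2 * V p q ^ 2 = 0 := by nlinarith [h1]
    rcases mul_eq_zero.mp h2 with h | h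
    · exact absurd (sub_eq_zero.mp (sq_eq_zero_iff.mp h)) hggne
    · exact sq_eq_zero_iff.mp h
  -- positivity of diagonal entries
  have hdiagpos : ∀ p : Fin N × Fin 2, 0 < V p p := by
    intro p
    have h := congrFun (congrFun hKKt p) p
    rw [Matrix.mul_apply] at h
    simp only [Matrix.transpose_apply, Matrix.one_apply_eq] at h
    have hVpp : V p p = ∑ q, K p q ^ 2 *
        Real.exp ((if q.2 = 0 then (-2:ℝ) else 2) * r q.1) := by
      rw [hVdef,
        show VIn r = Matrix.diagonal
          (fun q : Fin N × Fin 2 => Real.exp ((if q.2 = 0 then (-2:ℝ) else 2) * r q.1))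
          from rfl,
        conj_diag_apply]
    rw [hVpp]
    have hex : ∃ q : Fin N × Fin 2, K p q ≠ 0 := by
      by_contra hc
      push_neg at hc
      rw [Finset.sum_eq_zero (fun q _ => by rw [hc q]; ring)] at h
      norm_num at h
    obtain ⟨q0, hq0⟩ := hex
    refine Finset.sum_pos' (fun q _ => by positivity) ⟨q0, Finset.mem_univ _, ?_⟩
    have hq2 : 0 < K p q0 ^ 2 := (sq_nonneg _).lt_of_ne (Ne.symm (pow_ne_zero 2 hq0))
    exact mul_pos hq2 (Real.exp_pos _)
  -- conclusion
  refine ⟨fun a b hab i j => hdec (a, i) (b, j) hab, fun a => ?_⟩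
  have hzero1 : ∀ (b : Fin N), b ≠ a → ∀ (x y : Fin 2) (z : Fin N × Fin 2),
      V (b, x) z * V z (a, y) * 0 = 0 := fun _ _ _ _ _ => by ring
  -- determinant of the a-th block is 1
  have hdet : V (a, 0) (a, 0) * V (a, 1) (a, 1) - V (a, 0) (a, 1) * V (a, 1) (a, 0) = 1 := by
    have h := congrFun (congrFun hVsymp (a, (0 : Fin 2))) (a, (1 : Fin 2))
    rw [hVsym, Matrix.mul_apply, Fintype.sum_prod_type] at h
    rw [Finset.sum_eq_single a (fun b _ hb => Finset.sum_eq_zero fun i _ => by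
      rw [hdec (b, i) (a, 1) (by simpa using hb)]; ring) (fun hn => absurd (Finset.mem_univ a) hn)] at h
    rw [Fin.sum_univ_two] at h
    simp only [mul_omega] at h
    norm_num at h
    have hOa : Omega N (a, (0 : Fin 2)) (a, (1 : Fin 2)) = 1 := by
      simp [Omega]
    rw [hOa] at h
    rw [hVs (a, 0) (a, 1)]
    nlinarith [h]
  have h00 : (V * V) (a, (0 : Fin 2)) (a, (0 : Fin 2))
      = V (a, 0) (a, 0) ^ 2 + V (a, 0) (a, 1) * V (a, 1) (a, 0) := by
    rw [Matrix.mul_apply, Fintype.sum_prod_type]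
    rw [Finset.sum_eq_single a (fun b _ hb => Finset.sum_eq_zero fun i _ => by
      rw [hdec (b, i) (a, 0) (by simpa using hb)]; ring) (fun hn => absurd (Finset.mem_univ a) hn)]
    rw [Fin.sum_univ_two]
    ring
  have h11 : (V * V) (a, (1 : Fin 2)) (a, (1 : Fin 2))
      = V (a, 1) (a, 0) * V (a, 0) (a, 1) + V (a, 1) (a, 1) ^ 2 := by
    rw [Matrix.mul_apply, Fintype.sum_prod_type]
    rw [Finset.sum_eq_single a (fun b _ hb => Finset.sum_eq_zero fun i _ => by
      rw [hdec (b, i) (a, 1) (by simpa using hb)]; ring) (fun hn => absurd (Finset.mem_univ a) hn)]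
    rw [Fin.sum_univ_two]
    ring
  have htra : V (a, 0) (a, 0) ^ 2 + V (a, 1) (a, 1) ^ 2
      + 2 * (V (a, 0) (a, 1) * V (a, 1) (a, 0)) = 2 * Real.cosh (4 * r a) := by
    have h := ht_eq a
    rw [tfun, h00, h11] at h
    nlinarith [h]
  have hX2 : (V (a, 0) (a, 0) + V (a, 1) (a, 1)) ^ 2 = 2 * Real.cosh (4 * r a) + 2 := by
    nlinarith [htra, hdet]
  have hcosh2 : 2 * Real.cosh (4 * r a) + 2 = (2 * Real.cosh (2 * r a)) ^ 2 := by
    rw [show (4:ℝ) * r a = 2 * (2 * r a) by ring]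
    nlinarith [Real.cosh_two_mul (2 * r a), Real.cosh_sq (2 * r a)]
  have hXpos : 0 < V (a, 0) (a, 0) + V (a, 1) (a, 1) := by
    have := hdiagpos (a, (0 : Fin 2)); have := hdiagpos (a, (1 : Fin 2)); linarith
  have hYpos : (0:ℝ) < 2 * Real.cosh (2 * r a) := by
    linarith [Real.cosh_pos (2 * r a)]
  have hfin : V (a, 0) (a, 0) + V (a, 1) (a, 1) = 2 * Real.cosh (2 * r a) := by
    have h0 : (V (a, 0) (a, 0) + V (a, 1) (a, 1) - 2 * Real.cosh (2 * r a)) *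
        (V (a, 0) (a, 0) + V (a, 1) (a, 1) + 2 * Real.cosh (2 * r a)) = 0 := by
      nlinarith [hX2, hcosh2]
    rcases mul_eq_zero.mp h0 with h | h
    · linarith
    · linarith
  rw [Matrix.trace]
  rw [Fin.sum_univ_two]
  simp only [Matrix.diag_apply, dblock, Matrix.of_apply]
  exact hfin
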